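/- Let n ≥ 1 and let Z, W be real n×n matrices such that (i) W maps the kernel of Z into the orthogonal complement of the range of Z, i.e. ⟨Wv, Zu⟩ = 0 for all v ∈ ker Z and all u ∈ ℝⁿ, and (ii) ker Z ∩ ker W = {0}. Then there exists C > 0 such that for every real c with |c| > C the matrix W + c·Z is invertible. -/

import Mathlib

/-- Let `Z, W` be real `n×n` matrices such that (i) `W` maps `ker Z` into the orthogonal
complement of the range of `Z`, and (ii) `ker Z ∩ ker W = {0}`.  Then `W + c·Z` is
invertible for all real `c` with `|c|` large enough. -/
theorem exists_invertible_large_shift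
    {n : ℕ} (hn : 1 ≤ n) (Z W : Matrix (Fin n) (Fin n) ℝ)
    (h1 : ∀ v u : Fin n → ℝ, Z.mulVec v = 0 →
      dotProduct (W.mulVec v) (Z.mulVec u) = 0)
    (h2 : ∀ v : Fin n → ℝ, Z.mulVec v = 0 → W.mulVec v = 0 → v = 0) :
    ∃ C : ℝ, 0 < C ∧ ∀ c : ℝ, C < |c| → (W + c • Z).det ≠ 0 := by
  classical
  set E := EuclideanSpace ℝ (Fin n) with hE
  let e := WithLp.equiv 2 (Fin n → ℝ)
  let fZ : E →ₗ[ℝ] E := Matrix.toEuclideanLin Z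
  let fW : E →L[ℝ] E := LinearMap.toContinuousLinearMap (Matrix.toEuclideanLin W)
  let K : Submodule ℝ E := LinearMap.ker fZ
  let g : Kᗮ →ₗ[ℝ] E := fZ.comp Kᗮ.subtype
  have hg : LinearMap.ker g = ⊥ := by
    rw [LinearMap.ker_eq_bot']
    rintro ⟨x, hx⟩ hgx
    have hxK : x ∈ K := by
      simpa [g, K, LinearMap.mem_ker] using hgx
    exact Subtype.ext (Submodule.disjoint_def.mp (Submodule.orthogonal_disjoint K) x hxK hx)
  obtain ⟨K₀, hK₀, hanti⟩ := g.exists_antilipschitzWith hg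
  refine ⟨(K₀ : ℝ) * ‖fW‖ + 1, by positivity, ?_⟩
  intro c hc
  intro hdet
  obtain ⟨v, hv0, hv⟩ := (Matrix.exists_mulVec_eq_zero_iff).mpr hdet
  -- move everything to Euclidean space
  set x : E := e.symm v with hx
  have hfZ : fZ x = e.symm (Z.mulVec v) := Matrix.toEuclideanLin_apply_piLp_toLp Z v
  have hfW : fW x = e.symm (W.mulVec v) := Matrix.toEuclideanLin_apply_piLp_toLp W v
  have hEq : fW x + c • fZ x = 0 := by
    rw [hfZ, hfW]
    show WithLp.toLp 2 (W.mulVec v) + c • WithLp.toLp 2 (Z.mulVec v) = WithLp.toLp 2 0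
    rw [← WithLp.toLp_smul, ← WithLp.toLp_add]
    congr 1
    rw [← hv, Matrix.add_mulVec, Matrix.smul_mulVec]
  -- orthogonal decomposition
  set x₀ : E := (K.orthogonalProjectionOnto x : E) with hx₀
  set x₁ : E := x - x₀ with hx₁
  have hx₀K : x₀ ∈ K := (K.orthogonalProjectionOnto x).2
  have hx₁K : x₁ ∈ Kᗮ := Submodule.sub_starProjection_mem_orthogonal (K := K) x
  have hsum : x = x₀ + x₁ := by rw [hx₁]; abel
  have hfZx : fZ x = fZ x₁ := by
    rw [hsum, map_add, (LinearMap.mem_ker).mp hx₀K, zero_add]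
  -- inner products vs dot products
  have hinner_dot : ∀ a b : Fin n → ℝ,
      (inner ℝ (e.symm a) (e.symm b) : ℝ) = dotProduct a b := by
    intro a b
    simp [PiLp.inner_apply, dotProduct, RCLike.inner_apply, mul_comm, e]
  -- key scalar identity
  have key : (inner ℝ (fW x) (fZ x) : ℝ) + c * ‖fZ x‖ ^ 2 = 0 := by
    have := congrArg (fun y => (inner ℝ y (fZ x) : ℝ)) hEq
    simpa [inner_add_left, real_inner_smul_left, real_inner_self_eq_norm_sq,
      mul_comm] using this
  -- the `x₀` part contributes nothing
  have hW0 : (inner ℝ (fW x₀) (fZ x) : ℝ) = 0 := by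
    have hZx₀ : Z.mulVec (e x₀) = 0 := by
      have h' : fZ x₀ = 0 := (LinearMap.mem_ker).mp hx₀K
      have : e.symm (Z.mulVec (e x₀)) = 0 := by
        show WithLp.toLp 2 (Z.mulVec (e x₀)) = 0
        rw [← Matrix.toEuclideanLin_apply_piLp_toLp Z (e x₀)]
        exact h'
      exact congrArg WithLp.ofLp this
    have := h1 (e x₀) (e x) hZx₀
    have hW : fW x₀ = e.symm (W.mulVec (e x₀)) := by
      exact Matrix.toEuclideanLin_apply_piLp_toLp W (e x₀)
    have hZ : fZ x = e.symm (Z.mulVec (e x)) := by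
      exact Matrix.toEuclideanLin_apply_piLp_toLp Z (e x)
    rw [hW, hZ, hinner_dot]
    exact this
  have key1 : (inner ℝ (fW x₁) (fZ x₁) : ℝ) + c * ‖fZ x₁‖ ^ 2 = 0 := by
    have : (inner ℝ (fW x) (fZ x) : ℝ)
        = inner ℝ (fW x₀) (fZ x) + inner ℝ (fW x₁) (fZ x₁) := by
      rw [hfZx] at hW0 ⊢
      rw [hsum, map_add, inner_add_left]
    rw [this, hW0, zero_add, hfZx] at key
    exact key
  -- antilipschitz bound
  have hbound : ‖x₁‖ ≤ (K₀ : ℝ) * ‖fZ x₁‖ := by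
    have := hanti.le_mul_dist (⟨x₁, hx₁K⟩ : Kᗮ) 0
    simpa [dist_eq_norm, g] using this
  -- show `fZ x₁ = 0`
  have hZx₁ : fZ x₁ = 0 := by
    by_contra hne
    have hpos : 0 < ‖fZ x₁‖ := norm_pos_iff.mpr hne
    have h5 : |c| * ‖fZ x₁‖ ^ 2 ≤ ((K₀ : ℝ) * ‖fW‖) * ‖fZ x₁‖ ^ 2 := by
      have h3 : |c| * ‖fZ x₁‖ ^ 2 = |(inner ℝ (fW x₁) (fZ x₁) : ℝ)| := by
        have : c * ‖fZ x₁‖ ^ 2 = -(inner ℝ (fW x₁) (fZ x₁) : ℝ) := by linarith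
        rw [← abs_norm (fZ x₁), ← abs_pow, ← abs_mul, this, abs_neg]
      have h4 : |(inner ℝ (fW x₁) (fZ x₁) : ℝ)| ≤ ‖fW‖ * ‖x₁‖ * ‖fZ x₁‖ := by
        calc |(inner ℝ (fW x₁) (fZ x₁) : ℝ)| ≤ ‖fW x₁‖ * ‖fZ x₁‖ :=
              abs_real_inner_le_norm _ _
          _ ≤ ‖fW‖ * ‖x₁‖ * ‖fZ x₁‖ := by
              gcongr; exact fW.le_opNorm x₁
      calc |c| * ‖fZ x₁‖ ^ 2 = |(inner ℝ (fW x₁) (fZ x₁) : ℝ)| := h3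
        _ ≤ ‖fW‖ * ‖x₁‖ * ‖fZ x₁‖ := h4
        _ ≤ ‖fW‖ * ((K₀ : ℝ) * ‖fZ x₁‖) * ‖fZ x₁‖ := by gcongr
        _ = ((K₀ : ℝ) * ‖fW‖) * ‖fZ x₁‖ ^ 2 := by ring
    have h6 : |c| ≤ (K₀ : ℝ) * ‖fW‖ :=
      (mul_le_mul_iff_of_pos_right (pow_pos hpos 2)).mp h5
    linarith
  -- hence `x₁ = 0`, `x ∈ ker fZ`
  have hx₁0 : x₁ = 0 := by
    have : ‖x₁‖ ≤ 0 := by simpa [hZx₁] using hbound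
    simpa using norm_le_zero_iff.mp this
  have hxK : fZ x = 0 := by rw [hfZx, hx₁0, map_zero]
  have hZv : Z.mulVec v = 0 := by
    have : e.symm (Z.mulVec v) = 0 := by rw [← hfZ]; exact hxK
    exact congrArg WithLp.ofLp this
  have hWv : W.mulVec v = 0 := by
    have h' : fW x = 0 := by
      have := hEq
      rw [hxK, smul_zero, add_zero] at this
      exact this
    have : e.symm (W.mulVec v) = 0 := by rw [← hfW]; exact h'
    exact congrArg WithLp.ofLp this
  exact hv0 (h2 v hZv hWv)
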